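/- For every k ≥ 0, the iterate x^k is the corresponding combination of z^0, …, z^k: x^k = Σ_{i=0}^{k} e_{k,i} z^i, and the coefficients sum to one: Σ_{i=0}^{k} e_{k,i} = 1. -/
import Mathlib


/-- The AASCD iterates `x^{k+1} = (1−θ^k)x^k + nθ^k z^{k+1} − (n−1)θ^k z^k` are the
convex-type combinations `x^k = Σ_{i=0}^{k} e_{k,i} z^i` of `z^0, …, z^k` with the
recursively defined coefficients `e_{k,i}`, and `Σ_{i=0}^{k} e_{k,i} = 1`. -/
theorem aascd_convex_combination
    {V : Type*} [AddCommGroup V] [Module ℝ V]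
    (n : ℝ) (hn : 1 ≤ n)
    (θ : ℕ → ℝ) (z : ℕ → V)
    (x : ℕ → V) (hx0 : x 0 = z 0)
    (hx : ∀ k, x (k + 1)
        = (1 - θ k) • x k + (n * θ k) • z (k + 1) - ((n - 1) * θ k) • z k)
    (e : ℕ → ℕ → ℝ)
    (he00 : e 0 0 = 1)
    (he10 : e 1 0 = 1 - n * θ 0) (he11 : e 1 1 = n * θ 0)
    (herec1 : ∀ k, 1 ≤ k → ∀ i, i ≤ k - 1 → e (k + 1) i = (1 - θ k) * e k i)
    (herec2 : ∀ k, 1 ≤ k →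
        e (k + 1) k = n * (1 - θ k) * θ (k - 1) + θ k - n * θ k)
    (herec3 : ∀ k, 1 ≤ k → e (k + 1) (k + 1) = n * θ k) :
    ∀ k, x k = ∑ i ∈ Finset.range (k + 1), e k i • z i
      ∧ ∑ i ∈ Finset.range (k + 1), e k i = 1 := by
  have ekk : ∀ k, 1 ≤ k → e k k = n * θ (k - 1) := by
    intro k hk
    match k, hk with
    | 1, _ => simpa using he11
    | (m+2), _ => simpa using herec3 (m+1) (by omega)
  intro k
  induction k with
  | zero => simp [hx0, he00]
  | succ k ih =>
    obtain ⟨ihx, ihs⟩ := ih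
    rcases Nat.eq_zero_or_pos k with rfl | hk
    · constructor
      · rw [hx 0, hx0]
        rw [Finset.sum_range_succ, Finset.sum_range_succ, Finset.sum_range_zero,
          he10, he11]
        module
      · simp [Finset.sum_range_succ, he10, he11]
    · have hkk := ekk k hk
      have h2 := herec2 k hk
      have h3 := herec3 k hk
      have hcongr : ∀ i ∈ Finset.range k, e (k + 1) i = (1 - θ k) * e k i := by
        intro i hi
        exact herec1 k hk i (by simp at hi; omega)
      have ihx' : x k = (∑ i ∈ Finset.range k, e k i • z i) + e k k • z k := by
        rw [ihx, Finset.sum_range_succ]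
      have ihs' : (∑ i ∈ Finset.range k, e k i) + e k k = 1 := by
        rw [← Finset.sum_range_succ]; exact ihs
      constructor
      · have hcongrv : ∀ i ∈ Finset.range k,
            e (k + 1) i • z i = ((1 - θ k) * e k i) • z i := fun i hi => by
          rw [hcongr i hi]
        rw [hx k, ihx', Finset.sum_range_succ, Finset.sum_range_succ,
          Finset.sum_congr rfl hcongrv, h2, h3, hkk]
        rw [show (∑ i ∈ Finset.range k, ((1 - θ k) * e k i) • z i)
            = (1 - θ k) • ∑ i ∈ Finset.range k, e k i • z i by
          rw [Finset.smul_sum]; exact Finset.sum_congr rfl fun i _ => (smul_smul _ _ _).symm]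
        module
      · rw [Finset.sum_range_succ, Finset.sum_range_succ,
          Finset.sum_congr rfl hcongr, h2, h3, ← Finset.mul_sum]
        have : ∑ i ∈ Finset.range k, e k i = 1 - e k k := by linarith
        rw [this, hkk]; ring
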